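/- Fix B > 0 and suppose |S_B|/K ≥ α > 0 where S_B = {a : √(n* Δ_a²/(2 log T)) ≤ B}. Then for every ε ∈ (0,1), f(n*(1−ε)) ≤ 1 − αε/((1+2B)²(1+B)²), where f is the characteristic function ∑_{a=1}^K (√(T/y) + √(T Δ_a²/(2 log T)))^{-2} and n* its unique root. -/

import Mathlib

open Real Finset

private lemma perarm_mono (s r b : ℝ) (hs0 : 0 < s) (hr0 : 0 < r) (hr1 : r ≤ 1)
    (hb0 : 0 ≤ b) : (s / r + s * b)⁻¹ ^ 2 ≤ (s + s * b)⁻¹ ^ 2 := by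
  have hx : 0 < s + s * b := add_pos_of_pos_of_nonneg hs0 (mul_nonneg hs0.le hb0)
  have hsr : s ≤ s / r := by
    rw [le_div_iff₀ hr0]
    nlinarith
  have hle : s + s * b ≤ s / r + s * b := by linarith
  have h := inv_anti₀ hx hle
  exact pow_le_pow_left₀ (inv_nonneg.2 (le_of_lt (lt_of_lt_of_le hx hle))) h 2

private lemma perarm_gap (K B ε s r b : ℝ)
    (hK : 2 ≤ K) (hs1 : 1 ≤ s) (hsK : s ^ 2 ≤ K)
    (hr0 : 0 < r) (hr1 : r ≤ 1) (hrε : r ^ 2 = 1 - ε)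
    (hε0 : 0 < ε) (hb0 : 0 ≤ b) (hbB : b ≤ B) :
    ε / (K * ((1 + 2 * B) ^ 2 * (1 + B) ^ 2)) ≤
      (s + s * b)⁻¹ ^ 2 - (s / r + s * b)⁻¹ ^ 2 := by
  have hs0 : 0 < s := lt_of_lt_of_le one_pos hs1
  have hB0 : 0 ≤ B := hb0.trans hbB
  have hK0 : 0 < K := by linarith
  have h1b : (0:ℝ) < 1 + b := by linarith
  have h1br : (0:ℝ) < 1 + b * r := by nlinarith
  have e1 : (s + s * b)⁻¹ ^ 2 = (s ^ 2 * (1 + b) ^ 2)⁻¹ := by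
    rw [inv_pow, show s + s * b = s * (1 + b) by ring, mul_pow]
  have e2 : (s / r + s * b)⁻¹ ^ 2 = r ^ 2 * (s ^ 2 * (1 + b * r) ^ 2)⁻¹ := by
    rw [show s / r + s * b = s * (1 + b * r) / r by field_simp, inv_div, div_pow,
      mul_pow, div_eq_mul_inv]
  rw [e1, e2]
  have hgap : (s ^ 2 * (1 + b) ^ 2)⁻¹ - r ^ 2 * (s ^ 2 * (1 + b * r) ^ 2)⁻¹ =
      (s ^ 2 * ((1 + b * r) ^ 2 - r ^ 2 * (1 + b) ^ 2)) /
        (s ^ 2 * (1 + b) ^ 2 * (s ^ 2 * (1 + b * r) ^ 2)) := by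
    field_simp
  rw [hgap, div_le_div_iff₀ (by positivity) (by positivity)]
  have h1 : ε ≤ (1 + b * r) ^ 2 - r ^ 2 * (1 + b) ^ 2 := by
    nlinarith [mul_nonneg hb0 (mul_nonneg hr0.le (sub_nonneg.2 hr1))]
  have h2 : s ^ 2 * (1 + b) ^ 2 * (1 + b * r) ^ 2 ≤
      K * ((1 + 2 * B) ^ 2 * (1 + B) ^ 2) := by
    have hbr : b * r ≤ 2 * B := by nlinarith
    calc s ^ 2 * (1 + b) ^ 2 * (1 + b * r) ^ 2
        ≤ K * (1 + B) ^ 2 * (1 + 2 * B) ^ 2 := by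
          gcongr <;> nlinarith
      _ = K * ((1 + 2 * B) ^ 2 * (1 + B) ^ 2) := by ring
  have hA : ε * s ^ 2 ≤ ((1 + b * r) ^ 2 - r ^ 2 * (1 + b) ^ 2) * s ^ 2 :=
    mul_le_mul_of_nonneg_right h1 (sq_nonneg s)
  have hεs : 0 ≤ ε * s ^ 2 := by positivity
  calc ε * (s ^ 2 * (1 + b) ^ 2 * (s ^ 2 * (1 + b * r) ^ 2))
      = (ε * s ^ 2) * (s ^ 2 * (1 + b) ^ 2 * (1 + b * r) ^ 2) := by ring
    _ ≤ (((1 + b * r) ^ 2 - r ^ 2 * (1 + b) ^ 2) * s ^ 2) *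
        (K * ((1 + 2 * B) ^ 2 * (1 + B) ^ 2)) :=
        mul_le_mul hA h2 (by positivity) (le_trans hεs hA)
    _ = s ^ 2 * ((1 + b * r) ^ 2 - r ^ 2 * (1 + b) ^ 2) *
        (K * ((1 + 2 * B) ^ 2 * (1 + B) ^ 2)) := by ring

/-- If at least an `α`-fraction of the arms are `B`-near-optimal, then
`f(n*(1−ε)) ≤ 1 − αε/((1+2B)²(1+B)²)` for every `ε ∈ (0,1)`. -/
theorem ucb_characteristic_upper_perturbation
    (T K : ℕ) (hK : 2 ≤ K) (hTK : K ≤ T)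
    (Δ : ℕ → ℝ) (hΔ : ∀ a, 0 ≤ Δ a) (hΔ1 : Δ 0 = 0)
    (f : ℝ → ℝ)
    (hf : ∀ y, f y = ∑ a ∈ Finset.range K,
      (Real.sqrt ((T : ℝ) / y) + Real.sqrt ((T : ℝ) * (Δ a) ^ 2 / (2 * Real.log T)))⁻¹ ^ 2)
    (nstar : ℝ) (hn_lb : (T : ℝ) / K ≤ nstar) (hn_ub : nstar ≤ T)
    (hnroot : f nstar = 1)
    (B : ℝ) (hB : 0 < B)
    (α : ℝ) (hα : 0 < α) (hα1 : α ≤ 1)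
    (hSB : (α * K : ℝ) ≤
      ((Finset.range K).filter
        (fun a => Real.sqrt (nstar * (Δ a) ^ 2 / (2 * Real.log T)) ≤ B)).card)
    (ε : ℝ) (hε : 0 < ε) (hε1 : ε < 1) :
    f (nstar * (1 - ε)) ≤ 1 - α * ε / ((1 + 2 * B) ^ 2 * (1 + B) ^ 2) := by
  have hK2 : (2:ℝ) ≤ (K:ℝ) := by exact_mod_cast hK
  have hKT : (K:ℝ) ≤ (T:ℝ) := by exact_mod_cast hTK
  have hT2 : (2:ℝ) ≤ (T:ℝ) := le_trans hK2 hKT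
  have hT0 : (0:ℝ) < T := by linarith
  have hK0 : (0:ℝ) < K := by linarith
  have hn0 : 0 < nstar := lt_of_lt_of_le (div_pos hT0 hK0) hn_lb
  have hlog : 0 < Real.log T := Real.log_pos (by linarith)
  set s := Real.sqrt ((T:ℝ) / nstar) with hs_def
  set r := Real.sqrt (1 - ε) with hr_def
  set b : ℕ → ℝ := fun a => Real.sqrt (nstar * (Δ a) ^ 2 / (2 * Real.log T)) with hb_def
  have hr0 : 0 < r := Real.sqrt_pos.2 (by linarith)
  have hr1 : r ≤ 1 := Real.sqrt_le_one.2 (by linarith)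
  have hrε : r ^ 2 = 1 - ε := Real.sq_sqrt (by linarith)
  have hsq : s ^ 2 = (T:ℝ) / nstar := Real.sq_sqrt (by positivity)
  have hs1 : 1 ≤ s := by
    have h1 : (1:ℝ) ≤ (T:ℝ) / nstar := (one_le_div hn0).2 hn_ub
    nlinarith [Real.sqrt_nonneg ((T:ℝ) / nstar)]
  have hs0 : 0 < s := lt_of_lt_of_le one_pos hs1
  have hsK : s ^ 2 ≤ (K:ℝ) := by
    rw [hsq, div_le_iff₀ hn0]
    rw [div_le_iff₀ hK0] at hn_lb
    nlinarith
  have hb0 : ∀ a, 0 ≤ b a := fun a => Real.sqrt_nonneg _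
  -- rewrite the c_a term
  have hc : ∀ a, Real.sqrt ((T:ℝ) * (Δ a) ^ 2 / (2 * Real.log T)) = s * b a := by
    intro a
    rw [show (T:ℝ) * (Δ a) ^ 2 / (2 * Real.log T)
        = ((T:ℝ) / nstar) * (nstar * (Δ a) ^ 2 / (2 * Real.log T)) by
      field_simp]
    rw [Real.sqrt_mul (by positivity)]
  -- rewrite the sqrt at the perturbed point
  have hsr : Real.sqrt ((T:ℝ) / (nstar * (1 - ε))) = s / r := by
    rw [show (T:ℝ) / (nstar * (1 - ε)) = ((T:ℝ) / nstar) / (1 - ε) by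
      rw [div_div]]
    rw [Real.sqrt_div (by positivity)]
  have hf1 : f nstar = ∑ a ∈ Finset.range K, (s + s * b a)⁻¹ ^ 2 := by
    rw [hf]
    refine Finset.sum_congr rfl fun a _ => ?_
    rw [hc a]
  have hf2 : f (nstar * (1 - ε)) = ∑ a ∈ Finset.range K, (s / r + s * b a)⁻¹ ^ 2 := by
    rw [hf]
    refine Finset.sum_congr rfl fun a _ => ?_
    rw [hc a, hsr]
  set D : ℝ := (1 + 2 * B) ^ 2 * (1 + B) ^ 2 with hD_def
  have hD0 : 0 < D := by positivity
  set g : ℕ → ℝ := fun a => (s + s * b a)⁻¹ ^ 2 - (s / r + s * b a)⁻¹ ^ 2 with hg_def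
  have hg0 : ∀ a, 0 ≤ g a := fun a =>
    sub_nonneg.2 (perarm_mono s r (b a) hs0 hr0 hr1 (hb0 a))
  set S := (Finset.range K).filter
      (fun a => Real.sqrt (nstar * (Δ a) ^ 2 / (2 * Real.log T)) ≤ B) with hS_def
  have hgap : ∀ a ∈ S, ε / ((K:ℝ) * D) ≤ g a := by
    intro a ha
    have hbB : b a ≤ B := (Finset.mem_filter.1 ha).2
    exact perarm_gap (K:ℝ) B ε s r (b a) hK2 hs1 hsK hr0 hr1 hrε hε (hb0 a) hbB
  have hsum1 : (S.card : ℝ) * (ε / ((K:ℝ) * D)) ≤ ∑ a ∈ S, g a := by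
    calc (S.card : ℝ) * (ε / ((K:ℝ) * D)) = ∑ _a ∈ S, ε / ((K:ℝ) * D) := by
          rw [Finset.sum_const, nsmul_eq_mul]
      _ ≤ ∑ a ∈ S, g a := Finset.sum_le_sum hgap
  have hsum2 : ∑ a ∈ S, g a ≤ ∑ a ∈ Finset.range K, g a :=
    Finset.sum_le_sum_of_subset_of_nonneg (Finset.filter_subset _ _)
      (fun a _ _ => hg0 a)
  have hcard : α * (K:ℝ) ≤ (S.card : ℝ) := hSB
  have hc0 : 0 ≤ ε / ((K:ℝ) * D) := by positivity
  have hfinal : α * ε / D ≤ ∑ a ∈ Finset.range K, g a := by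
    have h1 : α * (K:ℝ) * (ε / ((K:ℝ) * D)) ≤ (S.card : ℝ) * (ε / ((K:ℝ) * D)) :=
      mul_le_mul_of_nonneg_right hcard hc0
    have h2 : α * (K:ℝ) * (ε / ((K:ℝ) * D)) = α * ε / D := by
      field_simp
    linarith
  have hsplit : ∑ a ∈ Finset.range K, g a
      = (∑ a ∈ Finset.range K, (s + s * b a)⁻¹ ^ 2)
        - ∑ a ∈ Finset.range K, (s / r + s * b a)⁻¹ ^ 2 := by
    rw [← Finset.sum_sub_distrib]
  rw [hf2]
  have hone : (∑ a ∈ Finset.range K, (s + s * b a)⁻¹ ^ 2) = 1 := by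
    rw [← hf1, hnroot]
  linarith [hfinal, hsplit, hone]
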